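/- Every solution ψ of the ODE m ρ̄ ψ' = r cos ψ + σ √(1 − (r²/σ²) sin² ψ) with 0 < r < σ satisfies the implicit relation E(ψ(t), r/σ) − E(ψ₀, r/σ) − (r/σ)(sin ψ(t) − sin ψ₀) = ((σ² − r²)/(m ρ̄ σ)) t, where E(φ, k) = ∫₀^φ √(1 − k² sin² u) du is the incomplete elliptic integral of the second kind. -/

import Mathlib

open Real

/-- Incomplete elliptic integral of the second kind. -/
noncomputable def ellipticE (φ k : ℝ) : ℝ :=
  ∫ u in (0 : ℝ)..φ, Real.sqrt (1 - k ^ 2 * sin u ^ 2)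

theorem elliptic_implicit_relation
    (r σ m ρbar ψ₀ : ℝ) (hr : 0 < r) (hrσ : r < σ)
    (hm : 0 < m) (hρ : 0 < ρbar)
    (ψ : ℝ → ℝ) (hψ0 : ψ 0 = ψ₀)
    (hode : ∀ t, HasDerivAt ψ
      ((r * cos (ψ t) + σ * Real.sqrt (1 - (r ^ 2 / σ ^ 2) * sin (ψ t) ^ 2))
        / (m * ρbar)) t) :
    ∀ t, ellipticE (ψ t) (r / σ) - ellipticE ψ₀ (r / σ)
        - (r / σ) * (sin (ψ t) - sin ψ₀)
      = ((σ ^ 2 - r ^ 2) / (m * ρbar * σ)) * t := by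
  have hσ : 0 < σ := hr.trans hrσ
  set k := r / σ with hk
  have hk1 : k < 1 := (div_lt_one hσ).2 hrσ
  have hk0 : 0 ≤ k := le_of_lt (div_pos hr hσ)
  have harg : r ^ 2 / σ ^ 2 = k ^ 2 := by
    rw [hk, div_pow]
  have hcont : Continuous fun u => Real.sqrt (1 - k ^ 2 * sin u ^ 2) := by
    continuity
  have hE : ∀ x : ℝ, HasDerivAt (fun φ => ellipticE φ k)
      (Real.sqrt (1 - k ^ 2 * sin x ^ 2)) x := fun x =>
    intervalIntegral.integral_hasDerivAt_right
      (hcont.intervalIntegrable _ _)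
      (hcont.stronglyMeasurable.stronglyMeasurableAtFilter)
      hcont.continuousAt
  set c := (σ ^ 2 - r ^ 2) / (m * ρbar * σ) with hc
  set g : ℝ → ℝ := fun t => ellipticE (ψ t) k - k * sin (ψ t) - c * t with hg
  have hA : ∀ x : ℝ, 0 ≤ 1 - k ^ 2 * sin (ψ x) ^ 2 := by
    intro x
    nlinarith [sin_sq_le_one (ψ x), sq_nonneg (sin (ψ x))]
  have hg' : ∀ x, HasDerivAt g 0 x := by
    intro x
    have hodex := hode x
    rw [harg] at hodex
    have h1 := (hE (ψ x)).comp x hodex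
    have h2 := ((Real.hasDerivAt_sin (ψ x)).comp x hodex).const_mul k
    have h3 : HasDerivAt (fun t : ℝ => c * t) c x := by
      simpa using (hasDerivAt_id x).const_mul c
    have hd := (h1.sub h2).sub h3
    refine hd.congr_deriv (Eq.symm ?_)
    have hs := Real.sq_sqrt (hA x)
    set s := Real.sqrt (1 - k ^ 2 * sin (ψ x) ^ 2) with hsdef
    have hmρ : (m : ℝ) * ρbar ≠ 0 := by positivity
    have hσ' : (σ : ℝ) ≠ 0 := ne_of_gt hσ
    have hsc := sin_sq_add_cos_sq (ψ x)
    rw [hc, hk] at *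
    field_simp
    field_simp [hk] at hs
    linear_combination r ^ 2 * hsc - hs
  have hconst : ∀ x : ℝ, g x = g 0 :=
    fun x => is_const_of_deriv_eq_zero (fun y => (hg' y).differentiableAt)
      (fun y => (hg' y).deriv) x 0
  intro t
  have h := hconst t
  simp only [hg, hψ0, mul_zero, sub_zero] at h
  linarith
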